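/- Let H : ℝ × [0,1] → ℂ be a regular homotopy: H is continuous, H(t+1, s) = H(t, s) for all t, s, each H(·, s) is continuously differentiable in t with ∂H/∂t(t, s) ≠ 0 for all t, s, and the map (t, s) ↦ ∂H/∂t(t, s) is continuous. Assume γ₀ := H(·, 0) and γ₁ := H(·, 1) are C² loops. Then ind(γ₀) = ind(γ₁). -/

import Mathlib

open Complex

lemma lift_diff_eq {θ θ' : ℝ → ℂ} (hθ : Continuous θ) (hθ' : Continuous θ')
    (h : ∀ t, Complex.exp (θ t) = Complex.exp (θ' t)) : θ 1 - θ 0 = θ' 1 - θ' 0 := by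
  set u : ℝ → ℂ := fun t => θ t - θ' t with hu_def
  have hu : Continuous u := hθ.sub hθ'
  have hexp : ∀ t, Complex.exp (u t) = 1 := by
    intro t; simp [hu_def, Complex.exp_sub, h t]
  have hint : ∀ t, ∃ n : ℤ, u t = n * (2 * Real.pi * Complex.I) := by
    intro t; exact Complex.exp_eq_one_iff.mp (hexp t)
  have key : ∀ t, u t = u 0 := by
    have hclopen : IsClopen {t : ℝ | u t = u 0} := by
      constructor
      · exact isClosed_eq hu continuous_const
      · rw [isOpen_iff_mem_nhds]
        intro t₀ ht₀
        have hV : u ⁻¹' Metric.ball (u t₀) 6 ∈ nhds t₀ := by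
          apply hu.continuousAt.preimage_mem_nhds
          exact Metric.ball_mem_nhds _ (by norm_num)
        filter_upwards [hV] with t ht
        obtain ⟨n, hn⟩ := hint t
        obtain ⟨m, hm⟩ := hint t₀
        have hdist : ‖u t - u t₀‖ < 6 := by
          simpa [Metric.mem_ball, dist_eq_norm] using ht
        have heq : n = m := by
          by_contra hne
          have hsub : u t - u t₀ = ((n - m : ℤ) : ℂ) * (2 * Real.pi * Complex.I) := by
            rw [hn, hm]; push_cast; ring
          have h1 : (1:ℝ) ≤ ‖((n - m : ℤ) : ℂ)‖ := by
            simp only [Complex.norm_intCast]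
            exact_mod_cast Int.one_le_abs (sub_ne_zero.mpr hne)
          have h2 : ‖(2 : ℂ) * Real.pi * Complex.I‖ = 2 * Real.pi := by
            simp [Complex.norm_real, abs_of_pos Real.pi_pos]
          have hge : (2:ℝ) * Real.pi ≤ ‖u t - u t₀‖ := by
            rw [hsub, norm_mul, h2]
            nlinarith [Real.pi_gt_three]
          nlinarith [Real.pi_gt_three]
        have : u t = u t₀ := by rw [hn, hm, heq]
        exact this.trans ht₀
    have := (isClopen_iff.mp hclopen).resolve_left ?_
    · intro t; rw [Set.eq_univ_iff_forall] at this; exact this t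
    · intro hempty
      have : (0 : ℝ) ∈ {t : ℝ | u t = u 0} := rfl
      rw [hempty] at this; exact this
  have h1 := key 1
  simp only [hu_def] at h1
  linear_combination h1

lemma loglift (γ : ℝ → ℂ) (h2 : ContDiff ℝ 2 γ) (hne : ∀ t, deriv γ t ≠ 0) :
    ∃ θ : ℝ → ℂ, Continuous θ ∧ (∀ t, Complex.exp (θ t) = deriv γ t) ∧
      θ 1 - θ 0 = ∫ t in (0:ℝ)..1, deriv (deriv γ) t / deriv γ t := by
  have h2' : ContDiff ℝ (1 + 1) γ := by
    have : ((1:WithTop ℕ∞) + 1) = 2 := by norm_num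
    rw [this]; exact h2
  have hd1 : ContDiff ℝ 1 (deriv γ) := (contDiff_succ_iff_deriv.mp h2').2.2
  have hdcont : Continuous (deriv γ) := hd1.continuous
  have hddcont : Continuous (deriv (deriv γ)) := hd1.continuous_deriv le_rfl
  set f : ℝ → ℂ := fun t => deriv (deriv γ) t / deriv γ t with hf_def
  have hfcont : Continuous f := hddcont.div hdcont hne
  set g : ℝ → ℂ := fun t => ∫ u in (0:ℝ)..t, f u with hg_def
  have hgderiv : ∀ t, HasDerivAt g (f t) t := fun t =>
    (hfcont.integral_hasStrictDerivAt 0 t).hasDerivAt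
  have hgcont : Continuous g := by
    have : Differentiable ℝ g := fun t => (hgderiv t).differentiableAt
    exact this.continuous
  set h : ℝ → ℂ := fun t => deriv γ t * Complex.exp (-(g t)) with hh_def
  have hmul : ∀ t, deriv γ t * f t = deriv (deriv γ) t := by
    intro t
    simp only [hf_def]
    rw [mul_comm, div_mul_cancel₀ _ (hne t)]
  have hhderiv : ∀ t, HasDerivAt h 0 t := by
    intro t
    have hd : HasDerivAt (deriv γ) (deriv (deriv γ) t) t :=
      ((hd1.differentiable one_ne_zero) t).hasDerivAt
    have he : HasDerivAt (fun t => Complex.exp (-(g t))) (Complex.exp (-(g t)) * (-(f t))) t :=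
      ((hgderiv t).neg).cexp
    have hprod := hd.mul he
    convert hprod using 1
    all_goals try rfl
    rw [← hmul t]; ring
  have hconst : ∀ t, h t = h 0 := by
    intro t
    exact is_const_of_deriv_eq_zero (fun x => (hhderiv x).differentiableAt)
      (fun x => (hhderiv x).deriv) t 0
  have hg0 : g 0 = 0 := intervalIntegral.integral_same
  have hexp : ∀ t, deriv γ t = deriv γ 0 * Complex.exp (g t) := by
    intro t
    have hc := hconst t
    simp only [hh_def, hg0, neg_zero, Complex.exp_zero, mul_one] at hc
    have h3 : deriv γ t * Complex.exp (-(g t)) * Complex.exp (g t)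
        = deriv γ 0 * Complex.exp (g t) := by rw [hc]
    rw [mul_assoc, ← Complex.exp_add] at h3
    simpa using h3
  refine ⟨fun t => Complex.log (deriv γ 0) + g t, continuous_const.add hgcont, ?_, ?_⟩
  · intro t
    rw [Complex.exp_add, Complex.exp_log (hne 0), ← hexp t]
  · simp [hg0]
    rfl

lemma mem_slitPlane_of_near_one {z : ℂ} (hz : ‖z - 1‖ < 1) : z ∈ Complex.slitPlane := by
  rw [Complex.mem_slitPlane_iff]
  by_contra hcon
  push_neg at hcon
  obtain ⟨hre, him⟩ := hcon
  have h1 : |(z - 1).re| ≤ ‖z - 1‖ := by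
    exact Complex.abs_re_le_norm _
  have h2 : (z - 1).re = z.re - 1 := by simp
  have : (1:ℝ) ≤ |(z - 1).re| := by
    rw [h2, abs_of_nonpos (by linarith)]; linarith
  linarith

set_option maxHeartbeats 1000000 in
/-- Invariance of the Whitney index under regular homotopy (homotopy through
immersed loops with continuously varying derivative). -/
theorem whitney_index_regular_homotopy_invariant (H : ℝ → ℝ → ℂ)
    (hcont : ContinuousOn (fun q : ℝ × ℝ => H q.1 q.2) (Set.univ ×ˢ Set.Icc 0 1))
    (hper : ∀ t : ℝ, ∀ s ∈ Set.Icc (0:ℝ) 1, H (t + 1) s = H t s)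
    (hC1 : ∀ s ∈ Set.Icc (0:ℝ) 1, ContDiff ℝ 1 (fun t => H t s))
    (himm : ∀ t : ℝ, ∀ s ∈ Set.Icc (0:ℝ) 1, deriv (fun t' => H t' s) t ≠ 0)
    (hderivcont : ContinuousOn (fun q : ℝ × ℝ => deriv (fun t' => H t' q.2) q.1)
      (Set.univ ×ˢ Set.Icc 0 1))
    (γ₀ γ₁ : ℝ → ℂ) (hγ₀ : γ₀ = fun t => H t 0) (hγ₁ : γ₁ = fun t => H t 1)
    (hC₀ : ContDiff ℝ 2 γ₀) (hC₁ : ContDiff ℝ 2 γ₁) :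
    (1 / (2 * (Real.pi : ℂ) * Complex.I)) *
        (∫ t in (0:ℝ)..1, deriv (deriv γ₀) t / deriv γ₀ t)
      = (1 / (2 * (Real.pi : ℂ) * Complex.I)) *
          (∫ t in (0:ℝ)..1, deriv (deriv γ₁) t / deriv γ₁ t) := by
  subst hγ₀; subst hγ₁
  set d : ℝ → ℝ → ℂ := fun t s => deriv (fun t' => H t' s) t with hd_def
  have h01 : (0:ℝ) ∈ Set.Icc (0:ℝ) 1 := ⟨le_refl 0, zero_le_one⟩
  have h11 : (1:ℝ) ∈ Set.Icc (0:ℝ) 1 := ⟨zero_le_one, le_refl 1⟩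
  -- periodicity of d in t
  have hdper : ∀ s ∈ Set.Icc (0:ℝ) 1, Function.Periodic (fun t => d t s) 1 := by
    intro s hs t
    have hfun : (fun t' => H t' s) = fun t' => H (t' + 1) s :=
      funext fun t' => (hper t' s hs).symm
    show d (t + 1) s = d t s
    calc d (t + 1) s = deriv (fun t' => H t' s) (t + 1) := rfl
      _ = deriv (fun t' => H (t' + 1) s) t := (deriv_comp_add_const _ _ _).symm
      _ = deriv (fun t' => H t' s) t := by rw [← hfun]
  have hdfract : ∀ s ∈ Set.Icc (0:ℝ) 1, ∀ t, d (Int.fract t) s = d t s := by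
    intro s hs t
    have h := (hdper s hs).sub_int_mul_eq (x := t) ⌊t⌋
    rw [mul_one] at h
    rw [Int.fract]
    exact h
  have hfractmem : ∀ t : ℝ, Int.fract t ∈ Set.Icc (0:ℝ) 1 :=
    fun t => ⟨Int.fract_nonneg t, le_of_lt (Int.fract_lt_one t)⟩
  -- continuity of d in t for fixed s
  have hdcont_t : ∀ s ∈ Set.Icc (0:ℝ) 1, Continuous (fun t => d t s) := by
    intro s hs
    exact hderivcont.comp_continuous (continuous_id.prodMk continuous_const)
      (fun t => ⟨Set.mem_univ _, hs⟩)
  -- lower bound on ‖d‖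
  have hK : IsCompact (Set.Icc (0:ℝ) 1 ×ˢ Set.Icc (0:ℝ) 1) :=
    isCompact_Icc.prod isCompact_Icc
  have hKsub : (Set.Icc (0:ℝ) 1 ×ˢ Set.Icc (0:ℝ) 1) ⊆ Set.univ ×ˢ Set.Icc 0 1 :=
    Set.prod_mono (Set.subset_univ _) le_rfl
  have hdK : ContinuousOn (fun q : ℝ × ℝ => d q.1 q.2)
      (Set.Icc (0:ℝ) 1 ×ˢ Set.Icc (0:ℝ) 1) := hderivcont.mono hKsub
  obtain ⟨q₀, hq₀K, hq₀min⟩ := hK.exists_isMinOn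
    ⟨(0, 0), ⟨h01, h01⟩⟩ (hdK.norm)
  set ε : ℝ := ‖d q₀.1 q₀.2‖ with hε_def
  have hεpos : 0 < ε := norm_pos_iff.mpr (himm q₀.1 q₀.2 hq₀K.2)
  have hlow : ∀ t, ∀ s ∈ Set.Icc (0:ℝ) 1, ε ≤ ‖d t s‖ := by
    intro t s hs
    rw [← hdfract s hs t]
    have h5 := isMinOn_iff.mp hq₀min (Int.fract t, s) (Set.mem_prod.mpr ⟨hfractmem t, hs⟩)
    simp only [hε_def]
    exact h5
  -- uniform continuity
  have hunif := hK.uniformContinuousOn_of_continuous hdK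
  rw [Metric.uniformContinuousOn_iff] at hunif
  obtain ⟨δ, hδpos, hδ⟩ := hunif ε hεpos
  -- closeness implies pointwise comparability
  have hclose : ∀ s ∈ Set.Icc (0:ℝ) 1, ∀ s' ∈ Set.Icc (0:ℝ) 1, |s' - s| < δ →
      ∀ t, ‖d t s' - d t s‖ < ‖d t s‖ := by
    intro s hs s' hs' hss t
    rw [← hdfract s hs t, ← hdfract s' hs' t]
    have hdist : dist ((Int.fract t, s') : ℝ × ℝ) ((Int.fract t, s) : ℝ × ℝ) < δ := by
      rw [Prod.dist_eq]
      simp only [dist_self, Real.dist_eq]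
      rw [max_eq_right (abs_nonneg _)]
      exact hss
    have h1 := hδ (Int.fract t, s') ⟨hfractmem t, hs'⟩ (Int.fract t, s) ⟨hfractmem t, hs⟩ hdist
    rw [dist_eq_norm] at h1
    exact lt_of_lt_of_le h1 (hlow (Int.fract t) s hs)
  -- value of the index at s = 0
  set c₀ : ℂ := ∫ t in (0:ℝ)..1, deriv (deriv fun t => H t 0) t / deriv (fun t => H t 0) t
    with hc₀_def
  -- the chain predicate
  set P : ℝ → Prop := fun s => s ∈ Set.Icc (0:ℝ) 1 ∧ ∃ θ : ℝ → ℂ, Continuous θ ∧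
    (∀ t, Complex.exp (θ t) = d t s) ∧ θ 1 - θ 0 = c₀ with hP_def
  have hP0 : P 0 := by
    refine ⟨h01, ?_⟩
    obtain ⟨θ, hθc, hθe, hθd⟩ := loglift (fun t => H t 0) hC₀ (fun t => himm t 0 h01)
    exact ⟨θ, hθc, hθe, hθd⟩
  -- the chain step
  have hstep : ∀ s s', P s → s' ∈ Set.Icc (0:ℝ) 1 → |s' - s| < δ → P s' := by
    intro s s' ⟨hs, θ, hθc, hθe, hθd⟩ hs' hss
    refine ⟨hs', ?_⟩
    have hcl := hclose s hs s' hs' hss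
    have hdne : ∀ t, d t s ≠ 0 := fun t => himm t s hs
    have hdne' : ∀ t, d t s' ≠ 0 := fun t => himm t s' hs'
    have hratio : ∀ t, ‖d t s' / d t s - 1‖ < 1 := by
      intro t
      rw [div_sub_one (hdne t), norm_div]
      rw [div_lt_one (norm_pos_iff.mpr (hdne t))]
      exact hcl t
    have hrne : ∀ t, d t s' / d t s ≠ 0 := fun t => div_ne_zero (hdne' t) (hdne t)
    set ℓ : ℝ → ℂ := fun t => Complex.log (d t s' / d t s) with hℓ_def
    have hratio_cont : Continuous (fun t => d t s' / d t s) :=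
      (hdcont_t s' hs').div (hdcont_t s hs) hdne
    have hℓc : Continuous ℓ := by
      rw [continuous_iff_continuousAt]
      intro t
      have hcomp : ContinuousAt (Complex.log ∘ fun u => d u s' / d u s) t :=
        ContinuousAt.comp (continuousAt_clog (mem_slitPlane_of_near_one (hratio t)))
          hratio_cont.continuousAt
      exact hcomp
    have hℓper : ℓ 1 = ℓ 0 := by
      have h1 : d 1 s' = d 0 s' := by
        have := hdper s' hs' 0; simpa using this
      have h2 : d 1 s = d 0 s := by
        have := hdper s hs 0; simpa using this
      simp only [hℓ_def, h1, h2]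
    refine ⟨fun t => θ t + ℓ t, hθc.add hℓc, ?_, ?_⟩
    · intro t
      rw [Complex.exp_add, hθe t, hℓ_def, Complex.exp_log (hrne t),
        mul_comm, div_mul_cancel₀ _ (hdne t)]
    · have : θ 1 + ℓ 1 - (θ 0 + ℓ 0) = θ 1 - θ 0 + (ℓ 1 - ℓ 0) := by ring
      rw [this, hℓper, sub_self, add_zero, hθd]
  -- induction along the chain
  have hchain : ∀ k : ℕ, P (min ((k : ℝ) * (δ / 2)) 1) := by
    intro k
    induction k with
    | zero => simpa [min_eq_left (zero_le_one' ℝ)] using hP0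
    | succ k ih =>
      set a : ℝ := min ((k : ℝ) * (δ / 2)) 1 with ha_def
      set b : ℝ := min (((k : ℕ) + 1 : ℝ) * (δ / 2)) 1 with hb_def
      have hamem : a ∈ Set.Icc (0:ℝ) 1 :=
        ⟨le_min (by positivity) zero_le_one, min_le_right _ _⟩
      have hbmem : b ∈ Set.Icc (0:ℝ) 1 :=
        ⟨le_min (by positivity) zero_le_one, min_le_right _ _⟩
      have hab : a ≤ b := min_le_min (by nlinarith [hδpos]) le_rfl
      have hba : b ≤ a + δ / 2 := by
        rcases le_total ((k : ℝ) * (δ / 2)) 1 with hcase | hcase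
        · have h1 : b ≤ ((k : ℕ) + 1 : ℝ) * (δ / 2) := min_le_left _ _
          have h2 : a = (k : ℝ) * (δ / 2) := min_eq_left hcase
          rw [h2]; push_cast at h1 ⊢; nlinarith
        · have h1 : a = 1 := min_eq_right hcase
          have h2 : b ≤ 1 := min_le_right _ _
          rw [h1]; linarith
      have hdist : |b - a| < δ := by
        rw [_root_.abs_of_nonneg (sub_nonneg.mpr hab)]
        linarith
      have hres := hstep a b ih hbmem hdist
      simpa only [hb_def, Nat.cast_add, Nat.cast_one] using hres
  have hP1 : P 1 := by
    obtain ⟨k, hk⟩ := exists_nat_ge (2 / δ)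
    have hk1 : (1:ℝ) ≤ (k : ℝ) * (δ / 2) := by
      rw [div_le_iff₀ hδpos] at hk
      nlinarith
    have := hchain k
    rwa [min_eq_right hk1] at this
  -- conclude
  obtain ⟨-, θ, hθc, hθe, hθd⟩ := hP1
  obtain ⟨θ₁, hθ₁c, hθ₁e, hθ₁d⟩ := loglift (fun t => H t 1) hC₁ (fun t => himm t 1 h11)
  have hsame : θ 1 - θ 0 = θ₁ 1 - θ₁ 0 :=
    lift_diff_eq hθc hθ₁c (fun t => by rw [hθe t, hθ₁e t])
  rw [hθd, hθ₁d] at hsame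
  rw [← hsame]
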